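/- Let 𝒞 be a preadditive category and let X, Y be objects of 𝒞 such that the endomorphism rings End(X) and End(Y) are local rings (Mathlib's IsLocalRing: nontrivial rings in which the sum of any two non-units is a non-unit). Suppose there exist q ∈ ℕ and families f : Fin q → (X ⟶ Y), g : Fin q → (Y ⟶ X) with Σ_{i < q} (f i ≫ g i) = 𝟙 X, and q' ∈ ℕ and families p : Fin q' → (Y ⟶ X), u : Fin q' → (X ⟶ Y) with Σ_{j < q'} (p j ≫ u j) = 𝟙 Y. Then X and Y are isomorphic. -/

import Mathlib

open CategoryTheory

private lemma aux_unit_add {R : Type*} [Semiring R] [IsLocalRing R] {a b : R}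
    (h : IsUnit (a + b)) : IsUnit a ∨ IsUnit b := by
  rcases h with ⟨u, hu⟩
  have h1 : (↑u⁻¹ * a) + (↑u⁻¹ * b) = 1 := by
    rw [← mul_add, ← hu, Units.inv_mul]
  rcases IsLocalRing.isUnit_or_isUnit_of_add_one h1 with h | h
  · left
    have := u.isUnit.mul h
    rwa [← mul_assoc, Units.mul_inv, one_mul] at this
  · right
    have := u.isUnit.mul h
    rwa [← mul_assoc, Units.mul_inv, one_mul] at this

private lemma aux_sum_unit {R : Type*} [Semiring R] [IsLocalRing R] {ι : Type*}
    (s : Finset ι) (f : ι → R) (h : IsUnit (∑ i ∈ s, f i)) : ∃ i ∈ s, IsUnit (f i) := by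
  classical
  induction s using Finset.induction_on with
  | empty => rw [Finset.sum_empty] at h; exact absurd h not_isUnit_zero
  | insert a s hx ih =>
    rw [Finset.sum_insert hx] at h
    rcases aux_unit_add h with h | h
    · exact ⟨a, Finset.mem_insert_self a s, h⟩
    · obtain ⟨i, hi, hu⟩ := ih h
      exact ⟨i, Finset.mem_insert_of_mem hi, hu⟩

private lemma aux_idem {R : Type*} [Ring R] [IsLocalRing R] {r : R}
    (h : r * r = r) : r = 0 ∨ r = 1 := by
  by_cases hu : IsUnit r
  · right
    rcases hu with ⟨u, rfl⟩
    have := congrArg (fun x => (↑u⁻¹ : R) * x) h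
    simpa [← mul_assoc] using this
  · left
    have h2 : IsUnit (1 - r) := by
      rcases aux_unit_add (a := r) (b := 1 - r) (by simp) with h' | h'
      · exact absurd h' hu
      · exact h'
    rcases h2 with ⟨v, hv⟩
    have h0 : r * (1 - r) = 0 := by rw [mul_sub, mul_one, h, sub_self]
    calc r = r * ((1 - r) * ↑v⁻¹) := by rw [← hv, Units.mul_inv, mul_one]
    _ = r * (1 - r) * ↑v⁻¹ := by rw [mul_assoc]
    _ = 0 := by rw [h0, zero_mul]

/-- **Stably isomorphic objects with local endomorphism rings are isomorphic.**
In a preadditive category, if `End X` and `End Y` are local rings and the composition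
pairings `Hom(Y,X) ⊗ Hom(X,Y) → End X` and `Hom(X,Y) ⊗ Hom(Y,X) → End Y` both hit the
respective identities (i.e. `X` and `Y` are stably isomorphic), then `X ≅ Y`. -/
theorem iso_of_stably_isomorphic_of_local_end {C : Type*} [Category C] [Preadditive C]
    (X Y : C) [IsLocalRing (End X)] [IsLocalRing (End Y)]
    (q : ℕ) (f : Fin q → (X ⟶ Y)) (g : Fin q → (Y ⟶ X))
    (hX : ∑ i : Fin q, f i ≫ g i = 𝟙 X)
    (q' : ℕ) (p : Fin q' → (Y ⟶ X)) (u : Fin q' → (X ⟶ Y))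
    (hY : ∑ j : Fin q', p j ≫ u j = 𝟙 Y) :
    Nonempty (X ≅ Y) := by
  set F : Fin q → End X := fun i => (f i ≫ g i : X ⟶ X) with hF
  have hFsum : ∑ i : Fin q, F i = (1 : End X) := hX
  have hXunit : IsUnit (∑ i : Fin q, F i) := hFsum ▸ isUnit_one
  obtain ⟨i, -, hi⟩ := aux_sum_unit Finset.univ F hXunit
  rcases hi with ⟨e, he⟩
  rw [hF] at he
  simp only at he
  set a := f i
  set b := g i
  -- inverse of e in End X: note End mul is reversed composition
  have hinv1 : (a ≫ b) ≫ (↑e⁻¹ : End X) = 𝟙 X := by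
    have : (↑e⁻¹ : End X) * (↑e : End X) = 1 := e.inv_mul
    rw [End.mul_def, he, End.one_def] at this
    exact this
  set c : Y ⟶ X := b ≫ (↑e⁻¹ : End X)
  have hac : a ≫ c = 𝟙 X := by
    simpa [c, Category.assoc] using hinv1
  set r : End Y := c ≫ a
  have hidem : r * r = r := by
    rw [End.mul_def]
    show (c ≫ a) ≫ c ≫ a = c ≫ a
    rw [Category.assoc, ← Category.assoc a c, hac, Category.id_comp]
  rcases aux_idem hidem with h0 | h1
  · exfalso
    have : (1 : End X) = 0 := by
      rw [End.one_def]
      calc (𝟙 X : X ⟶ X) = (a ≫ c) ≫ (a ≫ c) := by rw [hac, Category.comp_id]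
      _ = a ≫ (c ≫ a) ≫ c := by simp [Category.assoc]
      _ = a ≫ (0 : Y ⟶ Y) ≫ c := by rw [show (c ≫ a : Y ⟶ Y) = (0 : Y ⟶ Y) from h0]
      _ = 0 := by simp
    exact one_ne_zero (α := End X) this
  · exact ⟨⟨a, c, hac, h1⟩⟩
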